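/- arXiv:1108.1739 — 2 statements merged into one kernel-verified Lean document; each statement's English description precedes it below -/
import Mathlib

section
/- The probability p_1 = 3·∫_0^1 ∫_0^1 (1-a)^3·(3 - (1-a)(3-b))/(3 - (1-a)(2-b))^2 db da equals (1593/16)·ln 3 - 107·ln 2 - 35. -/
open MeasureTheory Real

/-- Inner integral evaluation. -/
lemma stit_inner (a : ℝ) (ha : a ∈ Set.Icc (0:ℝ) 1) :
    (∫ b in (0:ℝ)..1,
        (1 - a) ^ 3 * (3 - (1 - a) * (3 - b)) / (3 - (1 - a) * (2 - b)) ^ 2) =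
      (1 - a) ^ 2 * Real.log (2 + a) - (1 - a) ^ 2 * Real.log (1 + 2 * a)
        + (1 - a) ^ 3 / (2 + a) - (1 - a) ^ 3 / (1 + 2 * a) := by
  obtain ⟨ha0, ha1⟩ := ha
  have key : ∀ x ∈ Set.uIcc (0:ℝ) 1,
      HasDerivAt (fun b => (1 - a) ^ 2 *
          (Real.log ((1 + 2 * a) + (1 - a) * b) + (1 - a) / ((1 + 2 * a) + (1 - a) * b)))
        ((1 - a) ^ 3 * (3 - (1 - a) * (3 - x)) / (3 - (1 - a) * (2 - x)) ^ 2) x := by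
    intro x hx
    rw [Set.uIcc_of_le (by norm_num : (0:ℝ) ≤ 1)] at hx
    obtain ⟨hx0, hx1⟩ := hx
    have hD : (0:ℝ) < (1 + 2 * a) + (1 - a) * x := by nlinarith
    have hlin : HasDerivAt (fun b : ℝ => (1 + 2 * a) + (1 - a) * b) (1 - a) x := by
      simpa using ((hasDerivAt_id x).const_mul (1 - a)).const_add (1 + 2 * a)
    have h2 : HasDerivAt (fun b : ℝ => Real.log ((1 + 2 * a) + (1 - a) * b))
        ((1 - a) / ((1 + 2 * a) + (1 - a) * x)) x := hlin.log hD.ne'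
    have h3 := (hasDerivAt_const x (1 - a)).div hlin hD.ne'
    have h4 := (h2.add h3).const_mul ((1 - a) ^ 2)
    refine h4.congr_deriv ?_
    have hE : (3 - (1 - a) * (2 - x)) = (1 + 2 * a) + (1 - a) * x := by ring
    rw [hE]
    field_simp
    ring
  have hint : IntervalIntegrable (fun b =>
      (1 - a) ^ 3 * (3 - (1 - a) * (3 - b)) / (3 - (1 - a) * (2 - b)) ^ 2)
      volume 0 1 := by
    apply ContinuousOn.intervalIntegrable
    apply ContinuousOn.div
    · fun_prop
    · fun_prop
    · intro x hx
      rw [Set.uIcc_of_le (by norm_num : (0:ℝ) ≤ 1)] at hx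
      obtain ⟨hx0, hx1⟩ := hx
      have : (0:ℝ) < 3 - (1 - a) * (2 - x) := by nlinarith
      positivity
  rw [intervalIntegral.integral_eq_sub_of_hasDerivAt key hint]
  have e1 : (1 + 2 * a) + (1 - a) * 1 = 2 + a := by ring
  have e0 : (1 + 2 * a) + (1 - a) * 0 = 1 + 2 * a := by ring
  rw [e1, e0]
  ring

theorem stit_p1_value :
    3 * (∫ a in (0:ℝ)..1, ∫ b in (0:ℝ)..1,
        (1 - a) ^ 3 * (3 - (1 - a) * (3 - b)) / (3 - (1 - a) * (2 - b)) ^ 2) =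
      (1593 / 16) * Real.log 3 - 107 * Real.log 2 - 35 := by
  have hcongr : (∫ a in (0:ℝ)..1, ∫ b in (0:ℝ)..1,
        (1 - a) ^ 3 * (3 - (1 - a) * (3 - b)) / (3 - (1 - a) * (2 - b)) ^ 2)
      = ∫ a in (0:ℝ)..1,
        ((1 - a) ^ 2 * Real.log (2 + a) - (1 - a) ^ 2 * Real.log (1 + 2 * a)
          + (1 - a) ^ 3 / (2 + a) - (1 - a) ^ 3 / (1 + 2 * a)) := by
    apply intervalIntegral.integral_congr
    intro a ha
    rw [Set.uIcc_of_le (by norm_num : (0:ℝ) ≤ 1)] at ha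
    exact stit_inner a ha
  rw [hcongr]
  -- antiderivative G
  set G : ℝ → ℝ := fun a =>
    (36 - (1 - a) ^ 3 / 3) * Real.log (2 + a)
      + ((1 - a) ^ 3 / 3 - 45 / 16) * Real.log (1 + 2 * a)
      + (1 - a) ^ 3 / 6 + 11 * (1 - a) ^ 2 / 8 + 81 * (1 - a) / 8 with hGdef
  have key : ∀ a ∈ Set.uIcc (0:ℝ) 1,
      HasDerivAt G
        ((1 - a) ^ 2 * Real.log (2 + a) - (1 - a) ^ 2 * Real.log (1 + 2 * a)
          + (1 - a) ^ 3 / (2 + a) - (1 - a) ^ 3 / (1 + 2 * a)) a := by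
    intro a ha
    rw [Set.uIcc_of_le (by norm_num : (0:ℝ) ≤ 1)] at ha
    obtain ⟨ha0, ha1⟩ := ha
    have h2a : (0:ℝ) < 2 + a := by linarith
    have h12a : (0:ℝ) < 1 + 2 * a := by linarith
    have hq : HasDerivAt (fun x : ℝ => 1 - x) (-1) a := by
      simpa using (hasDerivAt_id a).const_sub 1
    have hc3 : HasDerivAt (fun x : ℝ => (1 - x) ^ 3) (3 * (1 - a) ^ 2 * (-1)) a := by
      simpa using hq.fun_pow 3
    have hc2 : HasDerivAt (fun x : ℝ => (1 - x) ^ 2) (2 * (1 - a) * (-1)) a := by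
      simpa using hq.fun_pow 2
    have hlog1 : HasDerivAt (fun x : ℝ => Real.log (2 + x)) (1 / (2 + a)) a := by
      simpa using ((hasDerivAt_id a).const_add 2).log h2a.ne'
    have hlog2 : HasDerivAt (fun x : ℝ => Real.log (1 + 2 * x)) (2 / (1 + 2 * a)) a := by
      have hl : HasDerivAt (fun x : ℝ => 1 + 2 * x) 2 a := by
        simpa using ((hasDerivAt_id a).const_mul 2).const_add 1
      simpa using hl.log h12a.ne'
    have hA : HasDerivAt (fun x : ℝ => 36 - (1 - x) ^ 3 / 3) ((1 - a) ^ 2) a := by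
      have := (hc3.div_const 3).const_sub 36
      exact this.congr_deriv (by ring)
    have hB : HasDerivAt (fun x : ℝ => (1 - x) ^ 3 / 3 - 45 / 16) (-(1 - a) ^ 2) a := by
      have := (hc3.div_const 3).sub_const (45 / 16)
      exact this.congr_deriv (by ring)
    have hT1 := hA.mul hlog1
    have hT2 := hB.mul hlog2
    have hT3 := hc3.div_const 6
    have hT4 := (hc2.const_mul 11).div_const 8
    have hT5 := (hq.const_mul 81).div_const 8
    have hsum := ((((hT1.add hT2).add hT3).add hT4).add hT5)
    refine hsum.congr_deriv ?_
    field_simp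
    ring
  have hint : IntervalIntegrable (fun a : ℝ =>
      (1 - a) ^ 2 * Real.log (2 + a) - (1 - a) ^ 2 * Real.log (1 + 2 * a)
        + (1 - a) ^ 3 / (2 + a) - (1 - a) ^ 3 / (1 + 2 * a)) volume 0 1 := by
    apply ContinuousOn.intervalIntegrable
    rw [Set.uIcc_of_le (by norm_num : (0:ℝ) ≤ 1)]
    have hpos1 : ∀ x ∈ Set.Icc (0:ℝ) 1, 2 + x ≠ 0 := by
      intro x hx; have := hx.1; intro h; linarith
    have hpos2 : ∀ x ∈ Set.Icc (0:ℝ) 1, 1 + 2 * x ≠ 0 := by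
      intro x hx; have := hx.1; intro h; linarith
    apply ContinuousOn.sub
    apply ContinuousOn.add
    apply ContinuousOn.sub
    · exact (by fun_prop : ContinuousOn (fun x : ℝ => (1 - x) ^ 2) _).mul
        ((by fun_prop : ContinuousOn (fun x : ℝ => 2 + x) _).log hpos1)
    · exact (by fun_prop : ContinuousOn (fun x : ℝ => (1 - x) ^ 2) _).mul
        ((by fun_prop : ContinuousOn (fun x : ℝ => 1 + 2 * x) _).log hpos2)
    · exact (by fun_prop : ContinuousOn (fun x : ℝ => (1 - x) ^ 3) _).div
        (by fun_prop) hpos1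
    · exact (by fun_prop : ContinuousOn (fun x : ℝ => (1 - x) ^ 3) _).div
        (by fun_prop) hpos2
  rw [intervalIntegral.integral_eq_sub_of_hasDerivAt key hint]
  rw [hGdef]
  simp only
  norm_num
  ring
end

section
/- ∑_{m=0}^∞ m^2·3·∫_0^1 (1-a)^3/(1+a)·(2a/(1+a))^m da = 6·∫_0^1 a(1+3a) da = 9, so the variance of the number of T-type vertices in the relative interior of the typical I-segment equals 9 - 1 = 8. -/
open MeasureTheory Set

lemma hasSum_sq_mul_geometric {r : ℝ} (hr : |r| < 1) :
    HasSum (fun n : ℕ => (n : ℝ) ^ 2 * r ^ n) (r * (1 + r) / (1 - r) ^ 3) := by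
  have hr' : ‖r‖ < 1 := by rwa [Real.norm_eq_abs]
  have h1r : (1 : ℝ) - r ≠ 0 := by
    intro h
    have : r = 1 := by linarith
    rw [this] at hr; norm_num at hr
  have C2 := hasSum_choose_mul_geometric_of_norm_lt_one (𝕜 := ℝ) 2 hr'
  have C1 := hasSum_coe_mul_geometric_of_norm_lt_one (𝕜 := ℝ) hr'
  have G := hasSum_geometric_of_norm_lt_one hr'
  have H := (C2.mul_left 2).sub ((C1.mul_left 3).add (G.mul_left 2))
  convert H using 1
  · rfl
  · funext n
    rw [Nat.cast_choose_two]
    push_cast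
    ring
  · field_simp
    ring

lemma hasSum_key {a : ℝ} (h0 : 0 ≤ a) (h1 : a < 1) :
    HasSum (fun m : ℕ => (m : ℝ) ^ 2 * ((1 - a) ^ 3 / (1 + a) * (2 * a / (1 + a)) ^ m))
      (2 * a * (1 + 3 * a)) := by
  have ha : (0 : ℝ) < 1 + a := by linarith
  have hx : |2 * a / (1 + a)| < 1 := by
    rw [abs_of_nonneg (by positivity), div_lt_one ha]; linarith
  have H := (hasSum_sq_mul_geometric hx).mul_left ((1 - a) ^ 3 / (1 + a))
  have hxx : 1 - 2 * a / (1 + a) = (1 - a) / (1 + a) := by field_simp; ring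
  convert H using 1
  · rfl
  · funext m; ring
  · rw [hxx]
    have h1a : (1 : ℝ) - a ≠ 0 := by linarith
    field_simp
    ring

theorem stit_second_moment_T_vertices :
    (∑' m : ℕ, (m : ℝ) ^ 2 *
        (3 * ∫ a in (0:ℝ)..1, (1 - a) ^ 3 / (1 + a) * (2 * a / (1 + a)) ^ m)) =
      6 * (∫ a in (0:ℝ)..1, a * (1 + 3 * a)) ∧
    6 * (∫ a in (0:ℝ)..1, a * (1 + 3 * a)) = 9 ∧
    (9 : ℝ) - 1 = 8 := by
  set F : ℕ → ℝ → ℝ :=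
    fun m a => (m : ℝ) ^ 2 * ((1 - a) ^ 3 / (1 + a) * (2 * a / (1 + a)) ^ m) with hF
  have hFmeas : ∀ m, Measurable (F m) := by
    intro m
    exact measurable_const.mul ((((measurable_const.sub measurable_id).pow_const 3).div
      (measurable_const.add measurable_id)).mul
      (((measurable_id.const_mul 2).div (measurable_const.add measurable_id)).pow_const m))
  have hmeas : ∀ m, AEStronglyMeasurable (F m) (volume.restrict (Ioc (0:ℝ) 1)) :=
    fun m => (hFmeas m).aestronglyMeasurable
  have hbound : ∀ a ∈ Ioc (0:ℝ) 1, (∑' m : ℕ, (‖F m a‖₊ : ENNReal)) ≤ 8 := by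
    rintro a ⟨ha0, ha1⟩
    rcases eq_or_lt_of_le ha1 with rfl | hlt
    · have : ∀ m : ℕ, F m 1 = 0 := by intro m; simp [hF]
      simp [this]
    · have hnn : ∀ m : ℕ, 0 ≤ F m a := by
        intro m
        have : (0:ℝ) < 1 + a := by linarith
        have h1a : (0:ℝ) ≤ 1 - a := by linarith
        positivity
      have K := hasSum_key ha0.le hlt
      calc (∑' m : ℕ, (‖F m a‖₊ : ENNReal))
          = ∑' m : ℕ, ENNReal.ofReal (F m a) := by
            congr 1; funext m; exact Real.enorm_eq_ofReal (hnn m)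
        _ = ENNReal.ofReal (∑' m : ℕ, F m a) :=
            (ENNReal.ofReal_tsum_of_nonneg hnn K.summable).symm
        _ = ENNReal.ofReal (2 * a * (1 + 3 * a)) := by rw [K.tsum_eq]
        _ ≤ ENNReal.ofReal 8 := ENNReal.ofReal_le_ofReal (by nlinarith)
        _ = 8 := by norm_num
  have hfin : (∑' m : ℕ, ∫⁻ a in Ioc (0:ℝ) 1, ‖F m a‖₊) ≠ ⊤ := by
    rw [← lintegral_tsum (fun m => (hFmeas m).nnnorm.coe_nnreal_ennreal.aemeasurable)]
    have : (∫⁻ a in Ioc (0:ℝ) 1, ∑' m : ℕ, (‖F m a‖₊ : ENNReal)) ≤ 8 := by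
      calc (∫⁻ a in Ioc (0:ℝ) 1, ∑' m : ℕ, (‖F m a‖₊ : ENNReal))
          ≤ ∫⁻ _ in Ioc (0:ℝ) 1, (8 : ENNReal) :=
            setLIntegral_mono measurable_const hbound
        _ = 8 := by simp [Real.volume_Ioc]
    exact ne_top_of_le_ne_top (by norm_num) this
  have hswap := integral_tsum (μ := volume.restrict (Ioc (0:ℝ) 1)) hmeas hfin
  have key1 : (∑' m : ℕ, (m : ℝ) ^ 2 *
        (3 * ∫ a in (0:ℝ)..1, (1 - a) ^ 3 / (1 + a) * (2 * a / (1 + a)) ^ m)) =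
      6 * ∫ a in (0:ℝ)..1, a * (1 + 3 * a) := by
    have step1 : ∀ m : ℕ, (m : ℝ) ^ 2 *
        (3 * ∫ a in (0:ℝ)..1, (1 - a) ^ 3 / (1 + a) * (2 * a / (1 + a)) ^ m) =
        3 * ∫ a in Ioc (0:ℝ) 1, F m a := by
      intro m
      rw [intervalIntegral.integral_of_le (by norm_num : (0:ℝ) ≤ 1), hF]
      rw [integral_const_mul]
      ring
    simp_rw [step1]
    rw [tsum_mul_left, ← hswap]
    have step2 : (∫ a in Ioc (0:ℝ) 1, ∑' m : ℕ, F m a) =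
        ∫ a in Ioc (0:ℝ) 1, 2 * a * (1 + 3 * a) := by
      rw [integral_Ioc_eq_integral_Ioo, integral_Ioc_eq_integral_Ioo]
      apply setIntegral_congr_fun measurableSet_Ioo
      rintro a ⟨ha0, ha1⟩
      exact (hasSum_key ha0.le ha1).tsum_eq
    rw [step2, ← intervalIntegral.integral_of_le (by norm_num : (0:ℝ) ≤ 1)]
    have : ∀ a : ℝ, 2 * a * (1 + 3 * a) = 2 * (a * (1 + 3 * a)) := fun a => by ring
    simp_rw [this, intervalIntegral.integral_const_mul]
    ring
  refine ⟨key1, ?_, by norm_num⟩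
  have : (∫ a in (0:ℝ)..1, a * (1 + 3 * a)) = 3/2 := by
    have h : ∀ a : ℝ, a * (1 + 3 * a) = a + 3 * a ^ 2 := fun a => by ring
    simp_rw [h]
    rw [intervalIntegral.integral_add (g := fun a : ℝ => 3 * a ^ 2) intervalIntegral.intervalIntegrable_id
      ((continuous_const.mul (continuous_pow 2)).intervalIntegrable 0 1),
      intervalIntegral.integral_const_mul, integral_id, integral_pow]
    norm_num
  rw [this]; norm_num
end
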